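/- Under the two-groups model, let R = R(p_1,…,p_m) ∈ {0,1,…,m} be any measurable function of the p-values, and suppose the R hypotheses with the smallest p-values are rejected. Then P{H_(R) = 0 and R > 0} = E[lfdr(p_(R))·1{R > 0}], where H_(R) is the hypothesis indicator paired with the largest rejected p-value p_(R). -/

import Mathlib

open MeasureTheory ProbabilityTheory Filter

noncomputable section

/-- The uniform distribution on `[0,1]` (the null `p`-value distribution). -/
def uniform01 : Measure ℝ := volume.restrict (Set.Icc 0 1)

/-- `orderStat m p k` is the `k`-th order statistic `p_(k)` of `p_1, …, p_m` (1-indexed),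
with the conventions `p_(0) = 0` and `p_(k) = 0` for `k > m`. -/
def orderStat (m : ℕ) (p : Fin m → ℝ) (k : ℕ) : ℝ :=
  if h : 1 ≤ k ∧ k ≤ m then p (Tuple.sort p ⟨k - 1, by omega⟩) else 0

/-- The SL rejection count at level `q`: the largest minimizer over `k ∈ {0, …, m}`
of `p_(k) - q k / m`. -/
def slCount (m : ℕ) (q : ℝ) (p : Fin m → ℝ) : ℕ :=
  sSup {k | k ≤ m ∧ ∀ j ≤ m,
    orderStat m p k - q * k / m ≤ orderStat m p j - q * j / m}

/-- The SL rejection threshold `τ_q = p_(R_q)`. -/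
def slThreshold (m : ℕ) (q : ℝ) (p : Fin m → ℝ) : ℝ :=
  orderStat m p (slCount m q p)

/-- The empirical cdf `F_m` of `p_1, …, p_m`. -/
def ecdf (m : ℕ) (p : Fin m → ℝ) (t : ℝ) : ℝ :=
  ((Finset.univ.filter fun i => p i ≤ t).card : ℝ) / m

/-- The alternative `p`-value distribution, with density `f1` on `[0,1]`. -/
def altMeasure (f1 : ℝ → ℝ) : Measure ℝ :=
  uniform01.withDensity fun t => ENNReal.ofReal (f1 t)

/-- The two-groups distribution of a pair `(H_i, p_i)`: `H_i ~ Bernoulli(1 - π0)`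
(`false` meaning the null holds), `p_i | H_i = false ~ Unif[0,1]`, and
`p_i | H_i = true` has density `f1`. -/
def pairMeasure (π0 : ℝ) (f1 : ℝ → ℝ) : Measure (Bool × ℝ) :=
  ENNReal.ofReal π0 • (Measure.dirac false).prod uniform01
    + ENNReal.ofReal (1 - π0) • (Measure.dirac true).prod (altMeasure f1)

/-- The joint distribution of the i.i.d. pairs `(H_i, p_i)`, `i = 1, …, m`. -/
def jointMeasure (m : ℕ) (π0 : ℝ) (f1 : ℝ → ℝ) : Measure (Fin m → Bool × ℝ) :=
  Measure.pi fun _ => pairMeasure π0 f1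

/-- The `p`-values of an outcome of the two-groups model. -/
def pvals (m : ℕ) (x : Fin m → Bool × ℝ) (i : Fin m) : ℝ := (x i).2

/-- The marginal `p`-value mixture density `f = π0 + (1 - π0) f1`. -/
def mixDensity (π0 : ℝ) (f1 : ℝ → ℝ) (t : ℝ) : ℝ := π0 + (1 - π0) * f1 t

/-- The local false discovery rate `lfdr(t) = π0 / f(t)`. -/
def lfdr (π0 : ℝ) (f1 : ℝ → ℝ) (t : ℝ) : ℝ := π0 / mixDensity π0 f1 t

/-- The event that, rejecting the `R` hypotheses with the smallest `p`-values,
the last rejection is a false discovery: `R > 0` and `H_(R) = 0`, where `H_(R)` is the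
hypothesis indicator paired with the `R`-th smallest `p`-value. -/
def lastRejNull (m : ℕ) (R : ℕ) (x : Fin m → Bool × ℝ) : Prop :=
  ∃ h : 1 ≤ R ∧ R ≤ m,
    (x (Tuple.sort (pvals m x) ⟨R - 1, by omega⟩)).1 = false

/-- The maximum of `g` over a finite set `S`, with the convention that the
maximum over the empty set is `0`. -/
def maxOver {ι : Type*} (S : Finset ι) (g : ι → ℝ) : ℝ :=
  if h : S.Nonempty then S.sup' h g else 0

/-- The SL rejection set `𝓡_q = {i : p_i ≤ τ_q}`. -/
def rejSet (m : ℕ) (q : ℝ) (p : Fin m → ℝ) : Finset (Fin m) :=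
  Finset.univ.filter fun i => p i ≤ slThreshold m q p

section aux

variable {π0 : ℝ} {f1 : ℝ → ℝ}

lemma mixDensity_nonneg (hπ0 : 0 ≤ π0) (hπ1 : π0 ≤ 1) (hf1nn : ∀ t, 0 ≤ f1 t) (t : ℝ) :
    0 ≤ mixDensity π0 f1 t := by
  have := hf1nn t; unfold mixDensity; nlinarith

lemma lfdr_nonneg (hπ0 : 0 ≤ π0) (hπ1 : π0 ≤ 1) (hf1nn : ∀ t, 0 ≤ f1 t) (t : ℝ) :
    0 ≤ lfdr π0 f1 t :=
  div_nonneg hπ0 (mixDensity_nonneg hπ0 hπ1 hf1nn t)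

lemma lfdr_mul_mix (hπ0 : 0 ≤ π0) (hπ1 : π0 ≤ 1) (hf1nn : ∀ t, 0 ≤ f1 t) (t : ℝ) :
    lfdr π0 f1 t * mixDensity π0 f1 t = π0 := by
  by_cases h : mixDensity π0 f1 t = 0
  · have h1 : 0 ≤ (1 - π0) * f1 t := mul_nonneg (by linarith) (hf1nn t)
    have h2 : π0 + (1 - π0) * f1 t = 0 := h
    have hπ : π0 = 0 := by linarith
    simp [lfdr, hπ]
  · unfold lfdr; field_simp

lemma measurable_mixDensity (hf1m : Measurable f1) : Measurable (mixDensity π0 f1) :=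
  measurable_const.add (measurable_const.mul hf1m)

lemma measurable_lfdr (hf1m : Measurable f1) : Measurable (lfdr π0 f1) :=
  measurable_const.div (measurable_mixDensity hf1m)

instance : IsProbabilityMeasure uniform01 :=
  ⟨by simp [uniform01, Real.volume_Icc]⟩

lemma f1_integrable (hf1int : ∫ t in Set.Icc (0:ℝ) 1, f1 t = 1) :
    Integrable f1 uniform01 := by
  by_contra h
  rw [show (∫ t in Set.Icc (0:ℝ) 1, f1 t) = ∫ t, f1 t ∂uniform01 from rfl,
    integral_undef h] at hf1int
  norm_num at hf1int

lemma altMeasure_univ (hf1nn : ∀ t, 0 ≤ f1 t)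
    (hf1int : ∫ t in Set.Icc (0:ℝ) 1, f1 t = 1) : altMeasure f1 Set.univ = 1 := by
  have h1 : ∫⁻ t, ENNReal.ofReal (f1 t) ∂uniform01 = 1 := by
    rw [← ofReal_integral_eq_lintegral_ofReal (f1_integrable hf1int)
      (Eventually.of_forall hf1nn)]
    rw [show (∫ t, f1 t ∂uniform01) = ∫ t in Set.Icc (0:ℝ) 1, f1 t from rfl, hf1int]
    simp
  rw [altMeasure, withDensity_apply _ MeasurableSet.univ, Measure.restrict_univ, h1]

lemma pairMeasure_prob (hπ0 : 0 ≤ π0) (hπ1 : π0 ≤ 1) (hf1nn : ∀ t, 0 ≤ f1 t)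
    (hf1int : ∫ t in Set.Icc (0:ℝ) 1, f1 t = 1) :
    IsProbabilityMeasure (pairMeasure π0 f1) := by
  haveI : IsFiniteMeasure (altMeasure f1) :=
    ⟨by rw [altMeasure_univ hf1nn hf1int]; exact ENNReal.one_lt_top⟩
  constructor
  rw [pairMeasure]
  simp only [Measure.add_apply, Measure.smul_apply, smul_eq_mul]
  rw [← Set.univ_prod_univ, Measure.prod_prod, Measure.prod_prod,
    altMeasure_univ hf1nn hf1int]
  simp only [measure_univ, mul_one, one_mul]
  rw [← ENNReal.ofReal_add hπ0 (by linarith)]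
  norm_num
end aux


section pairlem
variable {π0 : ℝ} {f1 : ℝ → ℝ}

lemma pair_lintegral (hπ0 : 0 ≤ π0) (hπ1 : π0 ≤ 1) (hf1m : Measurable f1)
    (hf1nn : ∀ t, 0 ≤ f1 t) (hf1int : ∫ t in Set.Icc (0:ℝ) 1, f1 t = 1)
    (g : ℝ → ENNReal) (hg : Measurable g) :
    ∫⁻ y, (if y.1 = false then g y.2 else 0) ∂(pairMeasure π0 f1)
      = ∫⁻ y, g y.2 * ENNReal.ofReal (lfdr π0 f1 y.2) ∂(pairMeasure π0 f1) := by
  haveI : IsFiniteMeasure (altMeasure f1) :=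
    ⟨by rw [altMeasure_univ hf1nn hf1int]; exact ENNReal.one_lt_top⟩
  have hlfdr : Measurable (lfdr π0 f1) := measurable_lfdr hf1m
  have hF2 : Measurable fun y : Bool × ℝ => g y.2 * ENNReal.ofReal (lfdr π0 f1 y.2) :=
    (hg.comp measurable_snd).mul ((hlfdr.comp measurable_snd).ennreal_ofReal)
  have hF1 : Measurable fun y : Bool × ℝ => (if y.1 = false then g y.2 else 0) := by
    apply Measurable.ite _ (hg.comp measurable_snd) measurable_const
    exact (measurable_fst (MeasurableSet.singleton false))
  have hdp : ∀ (b : Bool) (ν : Measure ℝ), SFinite ν → ∀ (F : Bool × ℝ → ENNReal),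
      Measurable F → ∫⁻ y, F y ∂((Measure.dirac b).prod ν) = ∫⁻ t, F (b, t) ∂ν := by
    intro b ν hν F hF
    rw [Measure.dirac_prod, lintegral_map hF measurable_prodMk_left]
  rw [pairMeasure, lintegral_add_measure, lintegral_add_measure,
    lintegral_smul_measure, lintegral_smul_measure, lintegral_smul_measure,
    lintegral_smul_measure,
    hdp false _ inferInstance _ hF1, hdp true _ inferInstance _ hF1,
    hdp false _ inferInstance _ hF2, hdp true _ inferInstance _ hF2]
  simp only [if_true, reduceCtorEq, if_false, lintegral_zero, smul_eq_mul, mul_zero, add_zero]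
  have h1 : Measurable fun t : ℝ => g t * ENNReal.ofReal (lfdr π0 f1 t) :=
    hg.mul (hlfdr.ennreal_ofReal)
  rw [altMeasure, lintegral_withDensity_eq_lintegral_mul _ hf1m.ennreal_ofReal h1]
  simp only [Pi.mul_apply, Function.comp_apply]
  rw [← lintegral_const_mul _ h1, ← lintegral_const_mul _ (f := fun a => ENNReal.ofReal (f1 a) * (g a * ENNReal.ofReal (lfdr π0 f1 a))) (hf1m.ennreal_ofReal.mul h1),
    ← lintegral_add_left (f := fun a => ENNReal.ofReal π0 * (g a * ENNReal.ofReal (lfdr π0 f1 a))) (measurable_const.mul h1)]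
  have hpt : ∀ t : ℝ,
      ENNReal.ofReal π0 * (g t * ENNReal.ofReal (lfdr π0 f1 t))
        + ENNReal.ofReal (1 - π0) * (ENNReal.ofReal (f1 t) *
            (g t * ENNReal.ofReal (lfdr π0 f1 t)))
      = g t * ENNReal.ofReal π0 := by
    intro t
    have hr : ENNReal.ofReal π0 * (g t * ENNReal.ofReal (lfdr π0 f1 t))
        + ENNReal.ofReal (1 - π0) * (ENNReal.ofReal (f1 t) *
            (g t * ENNReal.ofReal (lfdr π0 f1 t)))
        = g t * ((ENNReal.ofReal π0 + ENNReal.ofReal (1 - π0) * ENNReal.ofReal (f1 t))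
            * ENNReal.ofReal (lfdr π0 f1 t)) := by ring
    rw [hr, ← ENNReal.ofReal_mul (by linarith),
      ← ENNReal.ofReal_add hπ0 (mul_nonneg (by linarith) (hf1nn t)),
      show π0 + (1 - π0) * f1 t = mixDensity π0 f1 t from rfl,
      ← ENNReal.ofReal_mul (mixDensity_nonneg hπ0 hπ1 hf1nn t),
      mul_comm (mixDensity π0 f1 t), lfdr_mul_mix hπ0 hπ1 hf1nn t]
  simp only [hpt]
  rw [lintegral_mul_const _ hg, mul_comm]

end pairlem

section ins
variable {n : ℕ}
lemma piFinSuccAbove_symm_apply {α : Fin (n+1) → Type*} [∀ j, MeasurableSpace (α j)]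
    (i : Fin (n+1)) (y : α i) (z : ∀ j, α (i.succAbove j)) :
    (MeasurableEquiv.piFinSuccAbove α i).symm (y, z) = Fin.insertNth i y z := rfl


lemma pvals_insertNth {n : ℕ} (i : Fin (n+1)) (y : Bool × ℝ) (z : Fin n → Bool × ℝ) :
    pvals (n+1) (Fin.insertNth i y z) = Fin.insertNth i y.2 (fun j => (z j).2) := by
  funext j
  refine Fin.succAboveCases i ?_ ?_ j
  · simp [pvals]
  · intro k; simp [pvals]

end ins

section key
variable {π0 : ℝ} {f1 : ℝ → ℝ} {n : ℕ}

lemma key_lemma (hπ0 : 0 ≤ π0) (hπ1 : π0 ≤ 1) (hf1m : Measurable f1)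
    (hf1nn : ∀ t, 0 ≤ f1 t) (hf1int : ∫ t in Set.Icc (0:ℝ) 1, f1 t = 1)
    (B : Set (Fin (n+1) → ℝ)) (hB : MeasurableSet B) (i : Fin (n+1)) :
    jointMeasure (n+1) π0 f1 ((pvals (n+1) ⁻¹' B) ∩ {x | (x i).1 = false})
      = ∫⁻ x, ((pvals (n+1) ⁻¹' B).indicator
            (fun x => ENNReal.ofReal (lfdr π0 f1 ((x i).2))) x)
          ∂(jointMeasure (n+1) π0 f1) := by
  haveI hprob : IsProbabilityMeasure (pairMeasure π0 f1) :=
    pairMeasure_prob hπ0 hπ1 hf1nn hf1int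
  have hpv : Measurable (pvals (n+1)) :=
    measurable_pi_lambda _ fun j => (measurable_pi_apply j).snd
  have hlfdr : Measurable (lfdr π0 f1) := measurable_lfdr hf1m
  have hTm : MeasurableSet {x : Fin (n+1) → Bool × ℝ | (x i).1 = false} :=
    (measurable_pi_apply i).fst (MeasurableSet.singleton false)
  have hF1 : Measurable (((pvals (n+1) ⁻¹' B) ∩ {x | (x i).1 = false}).indicator
      (1 : (Fin (n+1) → Bool × ℝ) → ENNReal)) :=
    measurable_one.indicator ((hpv hB).inter hTm)
  have hF2 : Measurable fun x : Fin (n+1) → Bool × ℝ =>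
      (pvals (n+1) ⁻¹' B).indicator
        (fun x => ENNReal.ofReal (lfdr π0 f1 ((x i).2))) x :=
    ((hlfdr.comp ((measurable_pi_apply i).snd)).ennreal_ofReal).indicator (hpv hB)
  have MP := (measurePreserving_piFinSuccAbove
    (fun _ : Fin (n+1) => pairMeasure π0 f1) i).symm
  rw [← lintegral_indicator_one ((hpv hB).inter hTm)]
  rw [show jointMeasure (n+1) π0 f1 = Measure.pi fun _ => pairMeasure π0 f1 from rfl]
  rw [← MP.lintegral_comp hF1, ← MP.lintegral_comp hF2]
  have e := MeasurableEquiv.piFinSuccAbove (fun _ : Fin (n+1) => Bool × ℝ) i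
  rw [lintegral_prod_symm' (fun a => ((pvals (n+1) ⁻¹' B) ∩ {x | (x i).1 = false}).indicator
        (1 : (Fin (n+1) → Bool × ℝ) → ENNReal)
        ((MeasurableEquiv.piFinSuccAbove (fun _ : Fin (n+1) => Bool × ℝ) i).symm a))
      (hF1.comp (MeasurableEquiv.measurable _)),
    lintegral_prod_symm' (fun a => (pvals (n+1) ⁻¹' B).indicator
        (fun x => ENNReal.ofReal (lfdr π0 f1 ((x i).2)))
        ((MeasurableEquiv.piFinSuccAbove (fun _ : Fin (n+1) => Bool × ℝ) i).symm a))
      (hF2.comp (MeasurableEquiv.measurable _))]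
  refine lintegral_congr fun z => ?_
  have hw : Measurable fun t : ℝ => Fin.insertNth (α := fun _ => ℝ) i t (fun j => (z j).2) := by
    have h := (MeasurableEquiv.piFinSuccAbove (fun _ : Fin (n+1) => ℝ) i).symm.measurable.comp
      (measurable_id.prodMk
        (measurable_const : Measurable fun _ : ℝ => (fun j => ((z j).2 : ℝ))))
    exact h
  have hg : Measurable fun t : ℝ =>
      B.indicator (fun _ => (1:ENNReal)) (Fin.insertNth i t (fun j => (z j).2)) :=
    (measurable_const.indicator hB).comp hw
  have h1 : ∀ y : Bool × ℝ,
      ((pvals (n+1) ⁻¹' B) ∩ {x | (x i).1 = false}).indicator (1 : (Fin (n+1) → Bool × ℝ) → ENNReal)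
          ((MeasurableEquiv.piFinSuccAbove (fun _ : Fin (n+1) => Bool × ℝ) i).symm (y, z))
        = if y.1 = false then
            B.indicator (fun _ => (1:ENNReal)) (Fin.insertNth i y.2 (fun j => (z j).2))
          else 0 := by
    intro y
    rw [piFinSuccAbove_symm_apply]
    by_cases hy : y.1 = false
    · rw [if_pos hy]
      by_cases hBm : Fin.insertNth i y.2 (fun j => (z j).2) ∈ B
      · have hmem : Fin.insertNth i y z ∈
            (pvals (n+1) ⁻¹' B) ∩ {x | (x i).1 = false} := by
          refine ⟨?_, ?_⟩
          · rw [Set.mem_preimage, pvals_insertNth]; exact hBm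
          · show (Fin.insertNth (α := fun _ => Bool × ℝ) i y z i).1 = false
            rw [Fin.insertNth_apply_same]; exact hy
        rw [Set.indicator_of_mem hmem, Set.indicator_of_mem hBm]; rfl
      · have hnm : Fin.insertNth i y z ∉
            (pvals (n+1) ⁻¹' B) ∩ {x | (x i).1 = false} := by
          rintro ⟨hm1, -⟩
          rw [Set.mem_preimage, pvals_insertNth] at hm1; exact hBm hm1
        rw [Set.indicator_of_notMem hnm, Set.indicator_of_notMem hBm]
    · rw [if_neg hy]
      have hnm : Fin.insertNth i y z ∉
          (pvals (n+1) ⁻¹' B) ∩ {x | (x i).1 = false} := by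
        rintro ⟨-, hm2⟩
        have : (Fin.insertNth (α := fun _ => Bool × ℝ) i y z i).1 = false := hm2
        rw [Fin.insertNth_apply_same] at this; exact hy this
      rw [Set.indicator_of_notMem hnm]
  have h2 : ∀ y : Bool × ℝ,
      (pvals (n+1) ⁻¹' B).indicator (fun x => ENNReal.ofReal (lfdr π0 f1 ((x i).2)))
          ((MeasurableEquiv.piFinSuccAbove (fun _ : Fin (n+1) => Bool × ℝ) i).symm (y, z))
        = B.indicator (fun _ => (1:ENNReal)) (Fin.insertNth i y.2 (fun j => (z j).2))
            * ENNReal.ofReal (lfdr π0 f1 y.2) := by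
    intro y
    rw [piFinSuccAbove_symm_apply]
    by_cases hBm : Fin.insertNth i y.2 (fun j => (z j).2) ∈ B
    · rw [Set.indicator_of_mem, Set.indicator_of_mem hBm, one_mul,
        Fin.insertNth_apply_same]
      rwa [Set.mem_preimage, pvals_insertNth]
    · rw [Set.indicator_of_notMem, Set.indicator_of_notMem hBm, zero_mul]
      rw [Set.mem_preimage, pvals_insertNth]; exact hBm
  simp only [h1, h2]
  exact pair_lintegral hπ0 hπ1 hf1m hf1nn hf1int _ hg
end key


section comb
variable {m : ℕ}

lemma measurableSet_sortPerm (σ : Equiv.Perm (Fin m)) :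
    MeasurableSet {p : Fin m → ℝ | Tuple.sort p = σ} := by
  have hset : {p : Fin m → ℝ | Tuple.sort p = σ}
      = {p : Fin m → ℝ | Monotone (p ∘ σ)} ∩
        ⋂ (a : Fin m) (b : Fin m), {p : Fin m → ℝ | a < b → p (σ a) = p (σ b) → σ a < σ b} := by
    ext p
    simp only [Set.mem_setOf_eq, Set.mem_inter_iff, Set.mem_iInter]
    rw [show (Tuple.sort p = σ) ↔ (σ = Tuple.sort p) from eq_comm, Tuple.eq_sort_iff]
  rw [hset]
  apply MeasurableSet.inter
  · have : {p : Fin m → ℝ | Monotone (p ∘ σ)}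
        = ⋂ (a : Fin m) (b : Fin m), {p : Fin m → ℝ | a ≤ b → p (σ a) ≤ p (σ b)} := by
      ext p
      simp only [Set.mem_setOf_eq, Set.mem_iInter]
      exact ⟨fun h a b hab => h hab, fun h a b hab => h a b hab⟩
    rw [this]
    refine MeasurableSet.iInter fun a => MeasurableSet.iInter fun b => ?_
    by_cases hab : a ≤ b
    · have : {p : Fin m → ℝ | a ≤ b → p (σ a) ≤ p (σ b)}
          = {p : Fin m → ℝ | p (σ a) ≤ p (σ b)} := by
        ext p; simp [hab]
      rw [this]
      exact measurableSet_le (measurable_pi_apply _) (measurable_pi_apply _)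
    · have : {p : Fin m → ℝ | a ≤ b → p (σ a) ≤ p (σ b)} = Set.univ := by
        ext p; simp [hab]
      rw [this]; exact MeasurableSet.univ
  · refine MeasurableSet.iInter fun a => MeasurableSet.iInter fun b => ?_
    by_cases hab : a < b
    · by_cases hσ : σ a < σ b
      · have : {p : Fin m → ℝ | a < b → p (σ a) = p (σ b) → σ a < σ b} = Set.univ := by
          ext p; simp [hab, hσ]
        rw [this]; exact MeasurableSet.univ
      · have : {p : Fin m → ℝ | a < b → p (σ a) = p (σ b) → σ a < σ b}
            = {p : Fin m → ℝ | p (σ a) = p (σ b)}ᶜ := by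
          ext p; simp [hab, hσ]
        rw [this]
        exact (measurableSet_eq_fun (f := fun p : Fin m → ℝ => p (σ a))
          (g := fun p : Fin m → ℝ => p (σ b)) (measurable_pi_apply _) (measurable_pi_apply _)).compl
    · have : {p : Fin m → ℝ | a < b → p (σ a) = p (σ b) → σ a < σ b} = Set.univ := by
        ext p; simp [hab]
      rw [this]; exact MeasurableSet.univ

lemma measurableSet_sortApply (j i : Fin m) :
    MeasurableSet {p : Fin m → ℝ | Tuple.sort p j = i} := by
  have : {p : Fin m → ℝ | Tuple.sort p j = i}
      = ⋃ (σ : Equiv.Perm (Fin m)) (_ : σ j = i), {p : Fin m → ℝ | Tuple.sort p = σ} := by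
    ext p
    simp only [Set.mem_setOf_eq, Set.mem_iUnion]
    exact ⟨fun h => ⟨Tuple.sort p, h, rfl⟩, by rintro ⟨σ, h1, h2⟩; rw [h2]; exact h1⟩
  rw [this]
  exact MeasurableSet.iUnion fun σ => MeasurableSet.iUnion fun _ => measurableSet_sortPerm σ

end comb


def Aset (m : ℕ) (R : (Fin m → ℝ) → ℕ) (ji : Fin m × Fin m) : Set (Fin m → Bool × ℝ) :=
  pvals m ⁻¹' {p | R p = (ji.1 : ℕ) + 1 ∧ Tuple.sort p ji.1 = ji.2}

section comb2
variable {m : ℕ}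

lemma measurableSet_Aset (R : (Fin m → ℝ) → ℕ) (hR : Measurable R)
    (ji : Fin m × Fin m) : MeasurableSet (Aset m R ji) := by
  have hpv : Measurable (pvals m) :=
    measurable_pi_lambda _ fun j => (measurable_pi_apply j).snd
  apply hpv
  have : {p : Fin m → ℝ | R p = (ji.1 : ℕ) + 1 ∧ Tuple.sort p ji.1 = ji.2}
      = (R ⁻¹' {(ji.1 : ℕ) + 1}) ∩ {p : Fin m → ℝ | Tuple.sort p ji.1 = ji.2} := rfl
  rw [this]
  exact (hR (measurableSet_singleton _)).inter (measurableSet_sortApply _ _)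

lemma lastRejNull_eq_iUnion (R : (Fin m → ℝ) → ℕ) :
    {x | lastRejNull m (R (pvals m x)) x}
      = ⋃ ji : Fin m × Fin m, Aset m R ji ∩ {x | (x ji.2).1 = false} := by
  ext x
  simp only [Set.mem_setOf_eq, Set.mem_iUnion, Set.mem_inter_iff, lastRejNull]
  constructor
  · rintro ⟨⟨h1, h2⟩, hf⟩
    refine ⟨(⟨R (pvals m x) - 1, by omega⟩,
      Tuple.sort (pvals m x) ⟨R (pvals m x) - 1, by omega⟩), ⟨?_, rfl⟩, ?_⟩
    · show R (pvals m x) = R (pvals m x) - 1 + 1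
      omega
    · exact hf
  · rintro ⟨ji, ⟨hR, hs⟩, hf⟩
    have h1 : 1 ≤ R (pvals m x) := by omega
    have h2 : R (pvals m x) ≤ m := by
      have := ji.1.isLt; omega
    refine ⟨⟨h1, h2⟩, ?_⟩
    have heq : (⟨R (pvals m x) - 1, by omega⟩ : Fin m) = ji.1 := by
      apply Fin.ext; simp only [hR]; omega
    rw [heq, hs]
    exact hf

lemma Aset_disjoint (R : (Fin m → ℝ) → ℕ) :
    Pairwise (Function.onFun Disjoint
      fun ji : Fin m × Fin m => Aset m R ji ∩ {x | (x ji.2).1 = false}) := by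
  intro ji ji' hne
  rw [Function.onFun, Set.disjoint_left]
  rintro x ⟨⟨hR, hs⟩, -⟩ ⟨⟨hR', hs'⟩, -⟩
  apply hne
  have h1 : ji.1 = ji'.1 := Fin.ext (by omega)
  refine Prod.ext h1 ?_
  rw [← hs, ← hs', h1]

lemma repr_sum {γ : Type*} [AddCommMonoid γ] (R : (Fin m → ℝ) → ℕ)
    (hRle : ∀ p, R p ≤ m) (v : ℝ → γ) (x : Fin m → Bool × ℝ) :
    (if 0 < R (pvals m x) then v (orderStat m (pvals m x) (R (pvals m x))) else 0)
      = ∑ ji : Fin m × Fin m, (Aset m R ji).indicator (fun x => v ((x ji.2).2)) x := by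
  by_cases h0 : 0 < R (pvals m x)
  · have hkm : R (pvals m x) ≤ m := hRle _
    set k := R (pvals m x) with hk
    set j0 : Fin m := ⟨k - 1, by omega⟩ with hj0
    set i0 : Fin m := Tuple.sort (pvals m x) j0 with hi0
    have hj0v : (j0 : ℕ) = k - 1 := rfl
    have hxA : x ∈ Aset m R (j0, i0) := by
      refine ⟨?_, rfl⟩
      show k = (j0 : ℕ) + 1
      rw [hj0v]; omega
    rw [if_pos h0, Finset.sum_eq_single (j0, i0)]
    · rw [Set.indicator_of_mem hxA]
      congr 1
      rw [orderStat, dif_pos ⟨h0, hkm⟩]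
      rfl
    · rintro ⟨j, i⟩ - hne
      apply Set.indicator_of_notMem
      rintro ⟨hR, hs⟩
      apply hne
      have hjv : k = (j : ℕ) + 1 := hR
      have hj : j = j0 := by apply Fin.ext; rw [hj0v]; omega
      refine Prod.ext hj ?_
      rw [← hs, hj, ← hi0]
    · intro h; exact absurd (Finset.mem_univ _) h
  · rw [if_neg h0]
    symm
    apply Finset.sum_eq_zero
    rintro ⟨j, i⟩ -
    apply Set.indicator_of_notMem
    rintro ⟨hR, -⟩
    have : R (pvals m x) = (j : ℕ) + 1 := hR
    omega
end comb2


/-- Under the two-groups model, let `R = R(p_1, …, p_m) ∈ {0, …, m}`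
be any measurable function of the `p`-values, and reject the `R` hypotheses with the
smallest `p`-values. Then `P{H_(R) = 0 and R > 0} = E[lfdr(p_(R)) · 1{R > 0}]`. -/
theorem stmt6 (m : ℕ) (hm : 0 < m) (π0 : ℝ) (hπ0 : 0 ≤ π0) (hπ1 : π0 ≤ 1)
    (f1 : ℝ → ℝ) (hf1m : Measurable f1) (hf1nn : ∀ t, 0 ≤ f1 t)
    (hf1int : ∫ t in Set.Icc (0:ℝ) 1, f1 t = 1)
    (R : (Fin m → ℝ) → ℕ) (hRmeas : Measurable R) (hRle : ∀ p, R p ≤ m) :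
    (jointMeasure m π0 f1 {x | lastRejNull m (R (pvals m x)) x}).toReal
      = ∫ x, (if 0 < R (pvals m x)
            then lfdr π0 f1 (orderStat m (pvals m x) (R (pvals m x))) else 0)
          ∂ jointMeasure m π0 f1 := by
  obtain ⟨n, rfl⟩ : ∃ n, m = n + 1 := ⟨m - 1, by omega⟩
  set μ := jointMeasure (n+1) π0 f1 with hμ
  have hlfdr : Measurable (lfdr π0 f1) := measurable_lfdr hf1m
  have hAm : ∀ ji : Fin (n+1) × Fin (n+1), MeasurableSet (Aset (n+1) R ji) :=
    measurableSet_Aset R hRmeas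
  have hTm : ∀ i : Fin (n+1),
      MeasurableSet {x : Fin (n+1) → Bool × ℝ | (x i).1 = false} :=
    fun i => (measurable_pi_apply i).fst (MeasurableSet.singleton false)
  have hInd : ∀ ji : Fin (n+1) × Fin (n+1),
      Measurable fun x : Fin (n+1) → Bool × ℝ =>
        (Aset (n+1) R ji).indicator
          (fun x => ENNReal.ofReal (lfdr π0 f1 ((x ji.2).2))) x :=
    fun ji => ((hlfdr.comp ((measurable_pi_apply ji.2).snd)).ennreal_ofReal).indicator
      (hAm ji)
  have hL : μ {x | lastRejNull (n+1) (R (pvals (n+1) x)) x}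
      = ∑ ji : Fin (n+1) × Fin (n+1),
          μ (Aset (n+1) R ji ∩ {x | (x ji.2).1 = false}) := by
    rw [lastRejNull_eq_iUnion R,
      measure_iUnion (Aset_disjoint R) (fun ji => (hAm ji).inter (hTm ji.2))]
    exact tsum_fintype _
  have hK : ∀ ji : Fin (n+1) × Fin (n+1),
      μ (Aset (n+1) R ji ∩ {x | (x ji.2).1 = false})
        = ∫⁻ x, (Aset (n+1) R ji).indicator
            (fun x => ENNReal.ofReal (lfdr π0 f1 ((x ji.2).2))) x ∂μ :=
    fun ji => key_lemma hπ0 hπ1 hf1m hf1nn hf1int _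
      (by
        have : {p : Fin (n+1) → ℝ | R p = (ji.1 : ℕ) + 1 ∧ Tuple.sort p ji.1 = ji.2}
            = (R ⁻¹' {(ji.1 : ℕ) + 1}) ∩ {p : Fin (n+1) → ℝ | Tuple.sort p ji.1 = ji.2} := rfl
        rw [this]
        exact (hRmeas (measurableSet_singleton _)).inter (measurableSet_sortApply _ _))
      ji.2
  have hnn : 0 ≤ᵐ[μ] fun x => (if 0 < R (pvals (n+1) x)
      then lfdr π0 f1 (orderStat (n+1) (pvals (n+1) x) (R (pvals (n+1) x))) else 0) := by
    refine Eventually.of_forall fun x => ?_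
    dsimp only
    split
    · exact lfdr_nonneg hπ0 hπ1 hf1nn _
    · exact le_refl 0
  have hsm : AEStronglyMeasurable (fun x => (if 0 < R (pvals (n+1) x)
      then lfdr π0 f1 (orderStat (n+1) (pvals (n+1) x) (R (pvals (n+1) x))) else 0)) μ := by
    have hfun : (fun x => (if 0 < R (pvals (n+1) x)
        then lfdr π0 f1 (orderStat (n+1) (pvals (n+1) x) (R (pvals (n+1) x))) else 0))
        = fun x => ∑ ji : Fin (n+1) × Fin (n+1),
            (Aset (n+1) R ji).indicator (fun x => lfdr π0 f1 ((x ji.2).2)) x :=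
      funext (repr_sum R hRle (lfdr π0 f1))
    rw [hfun]
    exact (Finset.measurable_sum _ fun ji _ =>
      (hlfdr.comp ((measurable_pi_apply ji.2).snd)).indicator (hAm ji)).aestronglyMeasurable
  rw [integral_eq_lintegral_of_nonneg_ae hnn hsm]
  congr 1
  rw [hL]
  have hpt : (fun x => ENNReal.ofReal (if 0 < R (pvals (n+1) x)
      then lfdr π0 f1 (orderStat (n+1) (pvals (n+1) x) (R (pvals (n+1) x))) else 0))
      = fun x => ∑ ji : Fin (n+1) × Fin (n+1),
          (Aset (n+1) R ji).indicator
            (fun x => ENNReal.ofReal (lfdr π0 f1 ((x ji.2).2))) x := by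
    funext x
    rw [apply_ite ENNReal.ofReal, ENNReal.ofReal_zero]
    exact repr_sum R hRle (fun t => ENNReal.ofReal (lfdr π0 f1 t)) x
  rw [hpt, lintegral_finset_sum _ fun ji _ => hInd ji]
  exact Finset.sum_congr rfl fun ji _ => hK ji
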